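/- Let p > 1 and α > 0. If v : [0,∞) → (0,∞) is twice continuously differentiable and satisfies v''(x) = v(x)^p for all x ≥ 0, v'(0) = -α, and v(x) → 0 as x → ∞, then v(x) = (2(p+1)/(p-1)²)^{1/(p-1)} · (a+x)^{-2/(p-1)} for all x ≥ 0, where a = (2^{p/(p+1)} (p+1)^{1/(p+1)} / (p-1)) · α^{-(p-1)/(p+1)}. In particular, the stationary problem has exactly one positive solution. -/

import Mathlib

open Real Set Filter MeasureTheory

/-- For `p > 1` and `α > 0`, any positive `C²` solution of the stationary problem
`v'' = v^p` on `[0,∞)`, `v'(0) = -α`, `v(∞) = 0` coincides with the explicit solution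
`v(x) = (2(p+1)/(p-1)²)^{1/(p-1)} (a+x)^{-2/(p-1)}`; in particular the stationary problem has
exactly one positive solution. -/
theorem stmt_1 (p α : ℝ) (hp : 1 < p) (hα : 0 < α)
    (v : ℝ → ℝ)
    (hpos : ∀ x ≥ 0, 0 < v x)
    (hreg : ContDiffOn ℝ 2 v (Ici 0))
    (hode : ∀ x ≥ 0, derivWithin (derivWithin v (Ici 0)) (Ici 0) x = v x ^ p)
    (hbc : derivWithin v (Ici 0) 0 = -α)
    (hlim : Tendsto v atTop (nhds 0)) :
    ∀ x ≥ 0, v x = (2 * (p + 1) / (p - 1) ^ 2) ^ (1 / (p - 1)) *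
      ((2 ^ (p / (p + 1)) * (p + 1) ^ (1 / (p + 1)) / (p - 1)) * α ^ (-(p - 1) / (p + 1))
        + x) ^ (-2 / (p - 1)) := by
  have hp1 : (0:ℝ) < p - 1 := by linarith
  have hp1' : (0:ℝ) < p + 1 := by linarith
  set g := derivWithin v (Ici 0) with hgdef
  have hvd : DifferentiableOn ℝ v (Ici 0) := hreg.differentiableOn (by norm_num)
  have hgc : ContDiffOn ℝ 1 g (Ici 0) := hreg.derivWithin (uniqueDiffOn_Ici 0) (by norm_num)
  have hgd : DifferentiableOn ℝ g (Ici 0) := hgc.differentiableOn (by norm_num)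
  have hv' : ∀ x ∈ Ici (0:ℝ), HasDerivWithinAt v (g x) (Ici 0) x := fun x hx =>
    (hvd x hx).hasDerivWithinAt
  have hg' : ∀ x ∈ Ici (0:ℝ), HasDerivWithinAt g (v x ^ p) (Ici 0) x := by
    intro x hx
    have h := (hgd x hx).hasDerivWithinAt
    rwa [hode x hx] at h
  have hvA : ∀ x : ℝ, 0 < x → HasDerivAt v (g x) x := fun x hx =>
    (hv' x hx.le).hasDerivAt (Ici_mem_nhds hx)
  have hgA : ∀ x : ℝ, 0 < x → HasDerivAt g (v x ^ p) x := fun x hx =>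
    (hg' x hx.le).hasDerivAt (Ici_mem_nhds hx)
  -- g is strictly monotone
  have hgmono : StrictMonoOn g (Ici 0) := by
    apply strictMonoOn_of_deriv_pos (convex_Ici 0) hgc.continuousOn
    intro x hx
    rw [interior_Ici] at hx
    rw [(hgA x hx).deriv]
    exact Real.rpow_pos_of_pos (hpos x hx.le) p
  -- g is negative
  have hgneg : ∀ x ∈ Ici (0:ℝ), g x < 0 := by
    by_contra h
    push_neg at h
    obtain ⟨x0, hx0, hgx0⟩ := h
    have hx0' : (0:ℝ) ≤ x0 := hx0
    have hg1 : 0 < g (x0 + 1) :=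
      lt_of_le_of_lt hgx0 (hgmono hx0 (by simp only [mem_Ici]; linarith) (by linarith))
    have hmono : MonotoneOn v (Ici (x0 + 1)) := by
      apply monotoneOn_of_deriv_nonneg (convex_Ici _)
      · exact hvd.continuousOn.mono (Ici_subset_Ici.2 (by linarith))
      · intro x hx
        rw [interior_Ici] at hx
        have hx' : (0:ℝ) < x := by have := mem_Ioi.1 hx; linarith
        exact (hvA x hx').differentiableAt.differentiableWithinAt
      · intro x hx
        rw [interior_Ici] at hx
        have hxgt : x0 + 1 < x := mem_Ioi.1 hx
        have hx' : (0:ℝ) < x := by linarith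
        rw [(hvA x hx').deriv]
        have := hgmono (show x0 + 1 ∈ Ici (0:ℝ) by simp only [mem_Ici]; linarith)
          (show x ∈ Ici (0:ℝ) by simp only [mem_Ici]; linarith) hxgt
        linarith
    have hb : (0:ℝ) < v (x0 + 1) := hpos _ (by linarith)
    have hle : v (x0 + 1) ≤ 0 := by
      apply ge_of_tendsto hlim
      filter_upwards [eventually_ge_atTop (x0 + 1)] with x hx
      exact hmono self_mem_Ici hx hx
    linarith
  -- helper: functions with zero right derivative on Ici 0 are constant
  have const_of : ∀ F : ℝ → ℝ, (∀ x ∈ Ici (0:ℝ), HasDerivWithinAt F 0 (Ici 0) x) →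
      ∀ x ∈ Ici (0:ℝ), F x = F 0 := by
    intro F hF x hx
    have hcont : ContinuousOn F (Icc 0 x) := fun y hy =>
      ((hF y hy.1).continuousWithinAt).mono Icc_subset_Ici_self
    exact constant_of_has_deriv_right_zero hcont
      (fun y hy => (hF y hy.1).mono (Ici_subset_Ici.2 hy.1)) x ⟨hx, le_rfl⟩
  -- energy
  set c2 : ℝ := 2 / (p + 1) with hc2def
  have hc2pos : (0:ℝ) < c2 := by positivity
  set E : ℝ → ℝ := fun x => g x ^ 2 - c2 * v x ^ (p + 1) with hEdef
  have hE' : ∀ x ∈ Ici (0:ℝ), HasDerivWithinAt E 0 (Ici 0) x := by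
    intro x hx
    have h1 : HasDerivWithinAt (fun y => g y ^ 2)
        ((2:ℕ) * g x ^ (2 - 1) * (v x ^ p)) (Ici 0) x := (hg' x hx).pow 2
    have h2 : HasDerivWithinAt (fun y => v y ^ (p + 1))
        (g x * (p + 1) * v x ^ (p + 1 - 1)) (Ici 0) x :=
      (hv' x hx).rpow_const (Or.inl (hpos x hx).ne')
    have h3 := h1.sub (h2.const_mul c2)
    refine h3.congr_deriv (Eq.symm ?_)
    rw [show p + 1 - 1 = p by ring, hc2def]
    push_cast
    field_simp
    ring
  have hEconst : ∀ x ∈ Ici (0:ℝ), E x = E 0 := const_of E hE'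
  -- the energy is zero
  have hE0 : E 0 = 0 := by
    rcases lt_trichotomy (E 0) 0 with hneg | h0 | hposE
    · exfalso
      have h1 : Tendsto (fun x => v x ^ (p + 1)) atTop (nhds 0) := by
        have hc : ContinuousAt (fun t : ℝ => t ^ (p + 1)) 0 :=
          Real.continuousAt_rpow_const 0 (p + 1) (Or.inr (by linarith))
        have h := hc.tendsto.comp hlim
        simpa [Function.comp_def, Real.zero_rpow (by linarith : p + 1 ≠ 0)] using h
      have htend : Tendsto (fun x => E 0 + c2 * v x ^ (p + 1)) atTop (nhds (E 0)) := by
        have h := (h1.const_mul c2).const_add (E 0)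
        simpa using h
      have hge : (0:ℝ) ≤ E 0 := by
        apply ge_of_tendsto htend
        filter_upwards [eventually_ge_atTop (0:ℝ)] with x hx
        rw [← hEconst x hx, hEdef]
        have := sq_nonneg (g x)
        simp only []
        linarith
      linarith
    · exact h0
    · exfalso
      set s := Real.sqrt (E 0) with hsdef
      have hs : 0 < s := Real.sqrt_pos.2 hposE
      have hgle : ∀ x ∈ Ici (0:ℝ), g x + s ≤ 0 := by
        intro x hx
        have hEx : E 0 = g x ^ 2 - c2 * v x ^ (p + 1) := by
          rw [← hEconst x hx, hEdef]
        have hvp : 0 < v x ^ (p + 1) := Real.rpow_pos_of_pos (hpos x hx) _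
        have h2 : E 0 ≤ g x ^ 2 := by nlinarith
        have h3 := Real.sqrt_le_sqrt h2
        rw [Real.sqrt_sq_eq_abs, abs_of_neg (hgneg x hx)] at h3
        rw [← hsdef] at h3
        linarith
      have hanti : AntitoneOn (fun x => v x + s * x) (Ici 0) := by
        apply antitoneOn_of_deriv_nonpos (convex_Ici 0)
        · exact hvd.continuousOn.add (continuous_const.mul continuous_id).continuousOn
        · intro x hx
          rw [interior_Ici] at hx
          exact ((hvA x hx).add ((hasDerivAt_id x).const_mul s)).differentiableAt.differentiableWithinAt
        · intro x hx
          rw [interior_Ici] at hx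
          have hd : HasDerivAt (fun x => v x + s * x) (g x + s * 1) x :=
            (hvA x hx).add ((hasDerivAt_id x).const_mul s)
          rw [hd.deriv]
          have := hgle x (mem_Ici.2 (le_of_lt (mem_Ioi.1 hx)))
          linarith
      set T := (v 0 + 1) / s with hTdef
      have hT : (0:ℝ) ≤ T := by
        have h0 : 0 < v 0 := hpos 0 le_rfl
        positivity
      have hle := hanti self_mem_Ici hT hT
      simp only [mul_zero, add_zero] at hle
      have hvT : 0 < v T := hpos T hT
      have hsT : s * T = v 0 + 1 := by
        rw [hTdef]; field_simp
      linarith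
  -- closed form for g
  set c : ℝ := Real.sqrt c2 with hcdef
  have hcpos : 0 < c := Real.sqrt_pos.2 hc2pos
  have hcsq : c ^ 2 = c2 := Real.sq_sqrt hc2pos.le
  have hgeq : ∀ x ∈ Ici (0:ℝ), g x = -(c * v x ^ ((p + 1) / 2)) := by
    intro x hx
    have hEx := (hEconst x hx).trans hE0
    simp only [hEdef] at hEx
    have h1 : -g x = Real.sqrt (g x ^ 2) := by
      rw [Real.sqrt_sq_eq_abs, abs_of_neg (hgneg x hx)]
    have h2 : Real.sqrt (c2 * v x ^ (p + 1)) = c * v x ^ ((p + 1) / 2) := by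
      rw [Real.sqrt_mul hc2pos.le, ← hcdef]
      congr 1
      rw [Real.sqrt_eq_rpow, ← Real.rpow_mul (hpos x hx).le]
      congr 1
      ring
    have h3 : g x ^ 2 = c2 * v x ^ (p + 1) := by linarith
    rw [h3, h2] at h1
    linarith
  -- w = v ^ (-(p-1)/2) is linear
  set m : ℝ := c * (p - 1) / 2 with hmdef
  have hmpos : 0 < m := by rw [hmdef]; positivity
  set w : ℝ → ℝ := fun x => v x ^ (-((p - 1) / 2)) with hwdef
  have hwlin : ∀ x ∈ Ici (0:ℝ), w x = w 0 + m * x := by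
    have hF : ∀ x ∈ Ici (0:ℝ), HasDerivWithinAt (fun y => w y - m * y) 0 (Ici 0) x := by
      intro x hx
      have h1 : HasDerivWithinAt w (g x * (-((p - 1) / 2)) * v x ^ (-((p - 1) / 2) - 1))
          (Ici 0) x := (hv' x hx).rpow_const (Or.inl (hpos x hx).ne')
      have h2 := h1.sub ((hasDerivWithinAt_id x (Ici 0)).const_mul m)
      refine h2.congr_deriv (Eq.symm ?_)
      rw [hgeq x hx, show -((p - 1) / 2) - 1 = -((p + 1) / 2) by ring]
      have hmul : v x ^ ((p + 1) / 2) * v x ^ (-((p + 1) / 2)) = 1 := by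
        rw [← Real.rpow_add (hpos x hx)]; simp
      have : -(c * v x ^ ((p + 1) / 2)) * (-((p - 1) / 2)) * v x ^ (-((p + 1) / 2))
          = c * (p - 1) / 2 * (v x ^ ((p + 1) / 2) * v x ^ (-((p + 1) / 2))) := by ring
      rw [this, hmul, hmdef]
      ring
    intro x hx
    have h := const_of _ hF x hx
    simp only [mul_zero, sub_zero] at h
    linarith
  -- boundary value
  have hv0 : v 0 ^ ((p + 1) / 2) = α / c := by
    have h := hgeq 0 self_mem_Ici
    rw [hbc] at h
    have : c * v 0 ^ ((p + 1) / 2) = α := by linarith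
    field_simp [hcpos.ne'] at this ⊢
    linarith
  have hw0 : w 0 = (α / c) ^ (-(p - 1) / (p + 1)) := by
    simp only [hwdef]
    rw [← hv0, ← Real.rpow_mul (hpos 0 le_rfl).le]
    congr 1
    field_simp
  have hw0pos : 0 < w 0 := by
    rw [hw0]; positivity
  -- the two constant identities
  have hA : m ^ (-2 / (p - 1)) = (2 * (p + 1) / (p - 1) ^ 2) ^ (1 / (p - 1)) := by
    have hm2 : m ^ (2:ℕ) = (p - 1) ^ 2 / (2 * (p + 1)) := by
      have h1 : m ^ 2 = c ^ 2 * (p - 1) ^ 2 / 4 := by rw [hmdef]; ring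
      rw [h1, hcsq, hc2def]
      field_simp
      ring
    have h2 : (2 * (p + 1) / (p - 1) ^ 2) = m ^ (-2 : ℝ) := by
      rw [Real.rpow_neg hmpos.le, show (2:ℝ) = ((2:ℕ):ℝ) by norm_num, Real.rpow_natCast, hm2]
      push_cast
      rw [inv_div]
    rw [h2, ← Real.rpow_mul hmpos.le]
    congr 1
    ring
  have hB : w 0 / m = 2 ^ (p / (p + 1)) * (p + 1) ^ (1 / (p + 1)) / (p - 1)
      * α ^ (-(p - 1) / (p + 1)) := by
    have he1 : (-(p - 1) / (p + 1)) + 1 = 2 / (p + 1) := by field_simp; ring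
    have hc1 : c ^ (-(p - 1) / (p + 1)) * c = c ^ (2 / (p + 1)) := by
      rw [← he1, Real.rpow_add_one hcpos.ne']
    have hc2' : c ^ (2 / (p + 1)) = 2 ^ ((1:ℝ) / (p + 1)) / (p + 1) ^ ((1:ℝ) / (p + 1)) := by
      rw [hcdef, Real.sqrt_eq_rpow, ← Real.rpow_mul hc2pos.le,
        show 1 / 2 * (2 / (p + 1)) = 1 / (p + 1) by ring,
        hc2def, Real.div_rpow (by norm_num) hp1'.le]
    have hq2 : (2:ℝ) ^ (p / (p + 1)) = 2 / 2 ^ ((1:ℝ) / (p + 1)) := by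
      rw [show p / (p + 1) = 1 - 1 / (p + 1) by field_simp; ring,
        Real.rpow_sub (by norm_num), Real.rpow_one]
    have hcep : 0 < c ^ (-(p - 1) / (p + 1)) := Real.rpow_pos_of_pos hcpos _
    have hP : (0:ℝ) < (p + 1) ^ ((1:ℝ) / (p + 1)) := Real.rpow_pos_of_pos hp1' _
    have key : c ^ (-(p - 1) / (p + 1)) * c * (p + 1) ^ ((1:ℝ) / (p + 1))
        = 2 ^ ((1:ℝ) / (p + 1)) := by
      rw [hc1, hc2']
      field_simp
    rw [hw0, hmdef, Real.div_rpow hα.le hcpos.le, hq2, ← key]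
    field_simp
  -- conclusion
  intro x hx
  have hwx := hwlin x hx
  have hvx : v x = (w 0 + m * x) ^ (-2 / (p - 1)) := by
    rw [← hwx]
    simp only [hwdef]
    rw [← Real.rpow_mul (hpos x hx).le,
      show -((p - 1) / 2) * (-2 / (p - 1)) = 1 by field_simp,
      Real.rpow_one]
  have hsplit : w 0 + m * x = m * (w 0 / m + x) := by field_simp
  rw [hvx, hsplit, Real.mul_rpow hmpos.le (by positivity), hA, hB]
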